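/- arXiv:2404.14274 — 2 statements merged into one kernel-verified Lean document; each statement's English description precedes it below -/
import Mathlib

section
/- The curve t ↦ F_t u₀ is the unique global solution of the oscillation-eliminating damping initial value problem u'(t) = −Σ_{m=0}^{k} δ^m (u(t) − P^{m−1} u(t)) with u(0) = u₀; that is, F_t u₀ is differentiable in t, satisfies this linear ODE for all t ∈ ℝ, equals u₀ at t = 0, and any differentiable curve satisfying the same ODE and initial condition coincides with F_t u₀. -/
open scoped RealInnerProductSpace BigOperators

/-- The orthogonal projection `Pᵐ` onto the span of the orthonormal basis vectors of
level (polynomial degree) at most `m`. -/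
noncomputable def levelProj {E : Type*} [NormedAddCommGroup E] [InnerProductSpace ℝ E]
    {ι : Type*} [Fintype ι] (b : OrthonormalBasis ι ℝ E) (ℓ : ι → ℕ) (m : ℕ) (u : E) : E :=
  ∑ p ∈ Finset.univ.filter (fun p => ℓ p ≤ m), ⟪u, b p⟫ • b p

/-- The exact oscillation-eliminating damping operator
`F_t u₀ = Σ_{ℓ(p)=0} ⟨u₀,e_p⟩ e_p + Σ_{j=1}^{k} exp(−t Σ_{m=0}^{j} δ^m) Σ_{ℓ(p)=j} ⟨u₀,e_p⟩ e_p`. -/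
noncomputable def oeDamp {E : Type*} [NormedAddCommGroup E] [InnerProductSpace ℝ E]
    {ι : Type*} [Fintype ι] (b : OrthonormalBasis ι ℝ E) (ℓ : ι → ℕ) (δ : ℕ → ℝ) (k : ℕ)
    (t : ℝ) (u₀ : E) : E :=
  (∑ p ∈ Finset.univ.filter (fun p => ℓ p = 0), ⟪u₀, b p⟫ • b p)
    + ∑ j ∈ Finset.Icc 1 k, Real.exp (-(t * ∑ m ∈ Finset.range (j + 1), δ m)) •
        ∑ p ∈ Finset.univ.filter (fun p => ℓ p = j), ⟪u₀, b p⟫ • b p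

noncomputable def lam {ι : Type*} (ℓ : ι → ℕ) (δ : ℕ → ℝ) (p : ι) : ℝ :=
  if ℓ p = 0 then 0 else ∑ m ∈ Finset.range (ℓ p + 1), δ m

section helper
variable {E : Type*} [NormedAddCommGroup E] [InnerProductSpace ℝ E]
  {ι : Type*} [Fintype ι] [DecidableEq ι]

omit [DecidableEq ι] in
lemma obasis_ext (b : OrthonormalBasis ι ℝ E) {x y : E}
    (h : ∀ p, ⟪b p, x⟫ = ⟪b p, y⟫) : x = y := by
  apply b.repr.injective
  ext p
  rw [b.repr_apply_apply, b.repr_apply_apply]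
  exact h p

lemma inner_sum_smul (b : OrthonormalBasis ι ℝ E) (s : Finset ι) (a : ι → ℝ) (p : ι) :
    ⟪b p, ∑ q ∈ s, a q • b q⟫ = if p ∈ s then a p else 0 := by
  rw [inner_sum]
  simp only [real_inner_smul_right]
  have horth := b.orthonormal
  rw [orthonormal_iff_ite] at horth
  simp only [horth]
  simp [Finset.sum_ite_eq s p (fun q => a q), mul_comm]

lemma oeDamp_eq (b : OrthonormalBasis ι ℝ E) (ℓ : ι → ℕ) (δ : ℕ → ℝ) (k : ℕ)
    (hℓ : ∀ p, ℓ p ≤ k) (t : ℝ) (u₀ : E) :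
    oeDamp b ℓ δ k t u₀ = ∑ p, Real.exp (-(t * lam ℓ δ p)) • ⟪u₀, b p⟫ • b p := by
  apply obasis_ext b
  intro p
  have hR : ⟪b p, ∑ q, Real.exp (-(t * lam ℓ δ q)) • ⟪u₀, b q⟫ • b q⟫
      = Real.exp (-(t * lam ℓ δ p)) * ⟪u₀, b p⟫ := by
    simp_rw [smul_smul]
    rw [inner_sum_smul]
    simp
  rw [hR]
  have hL2 : ∀ j, ⟪b p, (∑ q ∈ Finset.univ.filter (fun q => ℓ q = j), ⟪u₀, b q⟫ • b q)⟫
      = if ℓ p = j then ⟪u₀, b p⟫ else 0 := by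
    intro j
    rw [inner_sum_smul]
    simp
  rw [oeDamp, inner_add_right, hL2 0, inner_sum]
  simp_rw [real_inner_smul_right, hL2, mul_ite, mul_zero]
  rw [Finset.sum_ite_eq (Finset.Icc 1 k) (ℓ p)]
  by_cases h0 : ℓ p = 0
  · simp [h0, lam]
  · have h1 : ℓ p ∈ Finset.Icc 1 k := by
      simp only [Finset.mem_Icc]
      exact ⟨Nat.one_le_iff_ne_zero.mpr h0, hℓ p⟩
    simp [h0, h1, lam]

lemma damp_rhs_eq (b : OrthonormalBasis ι ℝ E) (ℓ : ι → ℕ) (δ : ℕ → ℝ) (k : ℕ)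
    (hℓ : ∀ p, ℓ p ≤ k) (u : E) :
    -∑ m ∈ Finset.range (k + 1), δ m • (u - levelProj b ℓ (m - 1) u)
      = ∑ p, (-(lam ℓ δ p) * ⟪u, b p⟫) • b p := by
  apply obasis_ext b
  intro p
  have hR : ⟪b p, ∑ q, (-(lam ℓ δ q) * ⟪u, b q⟫) • b q⟫ = -(lam ℓ δ p) * ⟪u, b p⟫ := by
    rw [inner_sum_smul]; simp
  rw [hR, inner_neg_right, inner_sum]
  simp_rw [real_inner_smul_right, inner_sub_right, levelProj, inner_sum_smul,
    Finset.mem_filter, Finset.mem_univ, true_and]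
  have hcomm : ⟪b p, u⟫ = ⟪u, b p⟫ := real_inner_comm _ _
  have hstep : ∀ m, δ m * (⟪b p, u⟫ - if ℓ p ≤ m - 1 then ⟪u, b p⟫ else 0)
      = if ¬ (ℓ p ≤ m - 1) then δ m * ⟪u, b p⟫ else 0 := by
    intro m
    by_cases h : ℓ p ≤ m - 1 <;> simp [h, hcomm]
  simp_rw [hstep]
  rw [← Finset.sum_filter]
  by_cases h0 : ℓ p = 0
  · have : (Finset.range (k + 1)).filter (fun m => ¬ (ℓ p ≤ m - 1)) = ∅ := by
      apply Finset.filter_false_of_mem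
      intro m _
      simp [h0]
    rw [this]
    simp [lam, h0]
  · have hle : ℓ p ≤ k := hℓ p
    have : (Finset.range (k + 1)).filter (fun m => ¬ (ℓ p ≤ m - 1)) =
        Finset.range (ℓ p + 1) := by
      ext m
      simp only [Finset.mem_filter, Finset.mem_range, not_le]
      omega
    rw [this, ← Finset.sum_mul, lam, if_neg h0]
    ring

end helper

/-- `t ↦ F_t u₀` is the unique global solution of the oscillation-eliminating
damping initial value problem `u'(t) = −Σ_{m=0}^{k} δ^m (u(t) − P^{m−1} u(t))`, `u(0) = u₀`
(with the convention `P^{−1} = P⁰`, realized here via truncated subtraction `m - 1` on `ℕ`):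
it is differentiable in `t` and satisfies the ODE for all `t ∈ ℝ`, equals `u₀` at `t = 0`,
and any differentiable curve satisfying the same ODE and initial condition coincides with it. -/
theorem oeDamp_unique_solution_of_damping_ivp
    {E : Type*} [NormedAddCommGroup E] [InnerProductSpace ℝ E]
    {ι : Type*} [Fintype ι] [Nonempty ι]
    (b : OrthonormalBasis ι ℝ E) (ℓ : ι → ℕ) (δ : ℕ → ℝ) (k : ℕ)
    (hk : k = Finset.univ.sup ℓ) (u₀ : E) :
    (∀ t : ℝ, HasDerivAt (fun s => oeDamp b ℓ δ k s u₀)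
        (-∑ m ∈ Finset.range (k + 1),
            δ m • (oeDamp b ℓ δ k t u₀ - levelProj b ℓ (m - 1) (oeDamp b ℓ δ k t u₀))) t)
    ∧ oeDamp b ℓ δ k 0 u₀ = u₀
    ∧ ∀ v : ℝ → E,
        (∀ t : ℝ, HasDerivAt v
          (-∑ m ∈ Finset.range (k + 1), δ m • (v t - levelProj b ℓ (m - 1) (v t))) t) →
        v 0 = u₀ → ∀ t : ℝ, v t = oeDamp b ℓ δ k t u₀ := by
  classical
  have hℓ : ∀ p, ℓ p ≤ k := fun p => hk ▸ Finset.le_sup (Finset.mem_univ p)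
  refine ⟨?_, ?_, ?_⟩
  · intro t
    have hfun : (fun s => oeDamp b ℓ δ k s u₀)
        = fun s => ∑ p, Real.exp (-(s * lam ℓ δ p)) • ⟪u₀, b p⟫ • b p :=
      funext fun s => oeDamp_eq b ℓ δ k hℓ s u₀
    rw [hfun]
    have hD : HasDerivAt (fun s => ∑ p, Real.exp (-(s * lam ℓ δ p)) • ⟪u₀, b p⟫ • b p)
        (∑ p : ι, (Real.exp (-(t * lam ℓ δ p)) * -(lam ℓ δ p)) • ⟪u₀, b p⟫ • b p) t := by
      apply HasDerivAt.fun_sum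
      intro p _
      have h1 : HasDerivAt (fun s : ℝ => -(s * lam ℓ δ p)) (-(lam ℓ δ p)) t := by
        exact (((hasDerivAt_id t).mul_const (lam ℓ δ p)).neg).congr_deriv (by ring)
      exact (h1.exp).smul_const _
    convert hD using 1
    rw [damp_rhs_eq b ℓ δ k hℓ]
    apply Finset.sum_congr rfl
    intro p _
    have hin : ⟪oeDamp b ℓ δ k t u₀, b p⟫ = Real.exp (-(t * lam ℓ δ p)) * ⟪u₀, b p⟫ := by
      rw [oeDamp_eq b ℓ δ k hℓ, real_inner_comm]
      simp_rw [smul_smul]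
      rw [inner_sum_smul]
      simp
    rw [hin, smul_smul]
    congr 1
    ring
  · rw [oeDamp_eq b ℓ δ k hℓ]
    simp only [zero_mul, neg_zero, Real.exp_zero, one_smul]
    conv_rhs => rw [← b.sum_repr' u₀]
    exact Finset.sum_congr rfl fun p _ => by rw [real_inner_comm]
  · intro v hv hv0 t
    have key : ∀ p, ⟪b p, v t⟫ = Real.exp (-(t * lam ℓ δ p)) * ⟪b p, u₀⟫ := by
      intro p
      set lp := lam ℓ δ p with hlp
      have hc : ∀ s, HasDerivAt (fun s => ⟪b p, v s⟫) (-lp * ⟪b p, v s⟫) s := by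
        intro s
        have := (hasDerivAt_const s (b p)).inner ℝ (hv s)
        simp only [inner_zero_left, zero_add] at this
        refine this.congr_deriv ?_
        rw [damp_rhs_eq b ℓ δ k hℓ, inner_sum_smul]
        simp [real_inner_comm, hlp]
      have hg : ∀ s, HasDerivAt (fun s => Real.exp (s * lp) * ⟪b p, v s⟫) 0 s := by
        intro s
        have h1 : HasDerivAt (fun s : ℝ => Real.exp (s * lp)) (Real.exp (s * lp) * lp) s := by
          simpa using ((hasDerivAt_id s).mul_const lp).exp
        have := h1.mul (hc s)
        refine this.congr_deriv ?_
        ring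
      have hconst : Real.exp (t * lp) * ⟪b p, v t⟫ = Real.exp (0 * lp) * ⟪b p, v 0⟫ :=
        is_const_of_deriv_eq_zero (fun s => (hg s).differentiableAt)
          (fun s => (hg s).deriv) t 0
      rw [zero_mul, Real.exp_zero, one_mul, hv0] at hconst
      rw [Real.exp_neg, ← hconst]
      field_simp
    rw [oeDamp_eq b ℓ δ k hℓ]
    conv_lhs => rw [← b.sum_repr' (v t)]
    apply Finset.sum_congr rfl
    intro p _
    rw [key p, real_inner_comm u₀, smul_smul]
end

section
/- The locally divergence-free projection preserves cell averages of the magnetic field: for every B ∈ L²(K; ℝ²), the projection PB := Σ_{l=1}^{9} ( ⟨B, ψ⁽ˡ⁾⟩ / ⟨ψ⁽ˡ⁾, ψ⁽ˡ⁾⟩ ) ψ⁽ˡ⁾ satisfies ∫_K (PB)₁ dx dy = ∫_K B₁ dx dy and ∫_K (PB)₂ dx dy = ∫_K B₂ dx dy. -/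
open MeasureTheory intervalIntegral

/-- The scaled coordinate `X = (x − x_K)/(h_x/2)` on the interval `[x₁, x₂]`. -/
noncomputable def scaledCoord (x1 x2 x : ℝ) : ℝ := (x - (x1 + x2) / 2) / ((x2 - x1) / 2)

/-- The nine locally divergence-free basis vector fields of degree 2 on the rectangle
`K = [x₁,x₂] × [y₁,y₂]`, written in terms of `h_x = x₂−x₁`, `h_y = y₂−y₁` and the scaled
coordinates `X`, `Y`. -/
noncomputable def ldfBasis (x1 x2 y1 y2 : ℝ) : Fin 9 → ℝ → ℝ → ℝ × ℝ :=
  ![fun _ _ => (1, 0),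
    fun _ _ => (0, 1),
    fun x y => ((x2 - x1) * scaledCoord x1 x2 x, -((y2 - y1) * scaledCoord y1 y2 y)),
    fun _ y => (scaledCoord y1 y2 y, 0),
    fun x _ => (0, scaledCoord x1 x2 x),
    fun x y => ((x2 - x1) * (scaledCoord x1 x2 x ^ 2 - 1 / 3),
      -(2 * (y2 - y1) * scaledCoord x1 x2 x * scaledCoord y1 y2 y)),
    fun x y => (2 * (x2 - x1) * scaledCoord x1 x2 x * scaledCoord y1 y2 y,
      -((y2 - y1) * (scaledCoord y1 y2 y ^ 2 - 1 / 3))),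
    fun _ y => (scaledCoord y1 y2 y ^ 2 - 1 / 3, 0),
    fun x _ => (0, scaledCoord x1 x2 x ^ 2 - 1 / 3)]

/-- The `L²(K; ℝ²)` inner product `⟨f, g⟩ = ∫_K f·g dx dy` on the rectangle
`K = [x₁,x₂] × [y₁,y₂]`. -/
noncomputable def ipK (x1 x2 y1 y2 : ℝ) (f g : ℝ → ℝ → ℝ × ℝ) : ℝ :=
  ∫ x in x1..x2, ∫ y in y1..y2,
    ((f x y).1 * (g x y).1 + (f x y).2 * (g x y).2)

/-- The locally divergence-free projection
`PB = Σ_{l=1}^{9} (⟨B, ψ⁽ˡ⁾⟩ / ⟨ψ⁽ˡ⁾, ψ⁽ˡ⁾⟩) ψ⁽ˡ⁾`. -/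
noncomputable def ldfProj (x1 x2 y1 y2 : ℝ) (B : ℝ → ℝ → ℝ × ℝ) : ℝ → ℝ → ℝ × ℝ :=
  fun x y => ∑ l : Fin 9,
    (ipK x1 x2 y1 y2 B (ldfBasis x1 x2 y1 y2 l)
      / ipK x1 x2 y1 y2 (ldfBasis x1 x2 y1 y2 l) (ldfBasis x1 x2 y1 y2 l))
      • ldfBasis x1 x2 y1 y2 l x y



lemma integral_quadratic' (a b p q r : ℝ) :
    ∫ t in a..b, (p * t ^ 2 + q * t + r) =
      p * (b ^ 3 - a ^ 3) / 3 + q * (b ^ 2 - a ^ 2) / 2 + r * (b - a) := by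
  rw [intervalIntegral.integral_add (by apply Continuous.intervalIntegrable; fun_prop)
      (by apply Continuous.intervalIntegrable; fun_prop),
    intervalIntegral.integral_add (by apply Continuous.intervalIntegrable; fun_prop)
      (by apply Continuous.intervalIntegrable; fun_prop)]
  rw [intervalIntegral.integral_const_mul, intervalIntegral.integral_const_mul, integral_pow, integral_id,
    intervalIntegral.integral_const]
  simp
  ring

lemma sc_eq (a b : ℝ) (h : a ≠ b) (t : ℝ) :
    scaledCoord a b t = (2 / (b - a)) * t + (-(a + b) / (b - a)) := by
  unfold scaledCoord
  have : b - a ≠ 0 := sub_ne_zero.mpr (Ne.symm h)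
  field_simp
  ring

lemma int_sc (a b : ℝ) (h : a ≠ b) : (∫ t in a..b, scaledCoord a b t) = 0 := by
  have heq : ∀ t, scaledCoord a b t = 0 * t ^ 2 + (2 / (b - a)) * t + (-(a + b) / (b - a)) := by
    intro t; rw [sc_eq a b h]; ring
  rw [intervalIntegral.integral_congr (fun t _ => heq t), integral_quadratic']
  have hba : b - a ≠ 0 := sub_ne_zero.mpr (Ne.symm h)
  field_simp
  ring

lemma int_sc_sq (a b : ℝ) (h : a ≠ b) :
    (∫ t in a..b, (scaledCoord a b t ^ 2 - 1 / 3)) = 0 := by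
  have hba : b - a ≠ 0 := sub_ne_zero.mpr (Ne.symm h)
  have heq : ∀ t, scaledCoord a b t ^ 2 - 1 / 3 =
      (2 / (b - a)) ^ 2 * t ^ 2 + (2 * (2 / (b - a)) * (-(a + b) / (b - a))) * t
        + ((-(a + b) / (b - a)) ^ 2 - 1 / 3) := by
    intro t; rw [sc_eq a b h]; ring
  rw [intervalIntegral.integral_congr (fun t _ => heq t), integral_quadratic']
  field_simp
  ring

/-- values of `∫ y, (ψ l x y).1` -/
noncomputable def innerFst (x1 x2 y1 y2 : ℝ) : Fin 9 → ℝ → ℝ :=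
  ![fun _ => y2 - y1, fun _ => 0,
    fun x => (y2 - y1) * ((x2 - x1) * scaledCoord x1 x2 x),
    fun _ => 0, fun _ => 0,
    fun x => (y2 - y1) * ((x2 - x1) * (scaledCoord x1 x2 x ^ 2 - 1 / 3)),
    fun _ => 0, fun _ => 0, fun _ => 0]

/-- values of `∫ y, (ψ l x y).2` -/
noncomputable def innerSnd (x1 x2 y1 y2 : ℝ) : Fin 9 → ℝ → ℝ :=
  ![fun _ => 0, fun _ => y2 - y1, fun _ => 0, fun _ => 0,
    fun x => (y2 - y1) * scaledCoord x1 x2 x,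
    fun _ => 0, fun _ => 0, fun _ => 0,
    fun x => (y2 - y1) * (scaledCoord x1 x2 x ^ 2 - 1 / 3)]

section
variable (x1 x2 y1 y2 : ℝ)

lemma hcy1 (l : Fin 9) (x : ℝ) :
    Continuous fun y => (ldfBasis x1 x2 y1 y2 l x y).1 := by
  fin_cases l <;> simp [ldfBasis, scaledCoord] <;> fun_prop

lemma hcy2 (l : Fin 9) (x : ℝ) :
    Continuous fun y => (ldfBasis x1 x2 y1 y2 l x y).2 := by
  fin_cases l <;> simp [ldfBasis, scaledCoord] <;> fun_prop

lemma hGcont1 (l : Fin 9) : Continuous (innerFst x1 x2 y1 y2 l) := by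
  fin_cases l
  · exact continuous_const
  · exact continuous_const
  · show Continuous fun x => (y2 - y1) * ((x2 - x1) * scaledCoord x1 x2 x)
    unfold scaledCoord; fun_prop
  · exact continuous_const
  · exact continuous_const
  · show Continuous fun x => (y2 - y1) * ((x2 - x1) * (scaledCoord x1 x2 x ^ 2 - 1 / 3))
    unfold scaledCoord; fun_prop
  · exact continuous_const
  · exact continuous_const
  · exact continuous_const

lemma hGcont2 (l : Fin 9) : Continuous (innerSnd x1 x2 y1 y2 l) := by
  fin_cases l
  · exact continuous_const
  · exact continuous_const
  · exact continuous_const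
  · exact continuous_const
  · show Continuous fun x => (y2 - y1) * scaledCoord x1 x2 x
    unfold scaledCoord; fun_prop
  · exact continuous_const
  · exact continuous_const
  · exact continuous_const
  · show Continuous fun x => (y2 - y1) * (scaledCoord x1 x2 x ^ 2 - 1 / 3)
    unfold scaledCoord; fun_prop

lemma hin1 (hyne : y1 ≠ y2) (l : Fin 9) (x : ℝ) :
    (∫ y in y1..y2, (ldfBasis x1 x2 y1 y2 l x y).1) = innerFst x1 x2 y1 y2 l x := by
  fin_cases l
  · show (∫ _ in y1..y2, (1 : ℝ)) = y2 - y1; simp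
  · show (∫ _ in y1..y2, (0 : ℝ)) = 0; simp
  · show (∫ _ in y1..y2, (x2 - x1) * scaledCoord x1 x2 x)
        = (y2 - y1) * ((x2 - x1) * scaledCoord x1 x2 x)
    simp [smul_eq_mul]; ring
  · show (∫ y in y1..y2, scaledCoord y1 y2 y) = 0; exact int_sc y1 y2 hyne
  · show (∫ _ in y1..y2, (0 : ℝ)) = 0; simp
  · show (∫ _ in y1..y2, (x2 - x1) * (scaledCoord x1 x2 x ^ 2 - 1 / 3))
        = (y2 - y1) * ((x2 - x1) * (scaledCoord x1 x2 x ^ 2 - 1 / 3))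
    simp [smul_eq_mul]; ring
  · show (∫ y in y1..y2, 2 * (x2 - x1) * scaledCoord x1 x2 x * scaledCoord y1 y2 y) = 0
    rw [show (fun y => 2 * (x2 - x1) * scaledCoord x1 x2 x * scaledCoord y1 y2 y)
        = fun y => (2 * (x2 - x1) * scaledCoord x1 x2 x) * scaledCoord y1 y2 y from rfl,
      intervalIntegral.integral_const_mul, int_sc y1 y2 hyne, mul_zero]
  · show (∫ y in y1..y2, (scaledCoord y1 y2 y ^ 2 - 1 / 3)) = 0; exact int_sc_sq y1 y2 hyne
  · show (∫ _ in y1..y2, (0 : ℝ)) = 0; simp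

lemma hin2 (hyne : y1 ≠ y2) (l : Fin 9) (x : ℝ) :
    (∫ y in y1..y2, (ldfBasis x1 x2 y1 y2 l x y).2) = innerSnd x1 x2 y1 y2 l x := by
  fin_cases l
  · show (∫ _ in y1..y2, (0 : ℝ)) = 0; simp
  · show (∫ _ in y1..y2, (1 : ℝ)) = y2 - y1; simp
  · show (∫ y in y1..y2, -((y2 - y1) * scaledCoord y1 y2 y)) = 0
    rw [intervalIntegral.integral_neg, intervalIntegral.integral_const_mul, int_sc y1 y2 hyne, mul_zero, neg_zero]
  · show (∫ _ in y1..y2, (0 : ℝ)) = 0; simp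
  · show (∫ _ in y1..y2, scaledCoord x1 x2 x) = (y2 - y1) * scaledCoord x1 x2 x
    simp [smul_eq_mul]
  · show (∫ y in y1..y2, -(2 * (y2 - y1) * scaledCoord x1 x2 x * scaledCoord y1 y2 y)) = 0
    rw [intervalIntegral.integral_neg,
      show (fun y => 2 * (y2 - y1) * scaledCoord x1 x2 x * scaledCoord y1 y2 y)
        = fun y => (2 * (y2 - y1) * scaledCoord x1 x2 x) * scaledCoord y1 y2 y from rfl,
      intervalIntegral.integral_const_mul, int_sc y1 y2 hyne, mul_zero, neg_zero]
  · show (∫ y in y1..y2, -((y2 - y1) * (scaledCoord y1 y2 y ^ 2 - 1 / 3))) = 0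
    rw [intervalIntegral.integral_neg, intervalIntegral.integral_const_mul, int_sc_sq y1 y2 hyne, mul_zero,
      neg_zero]
  · show (∫ _ in y1..y2, (0 : ℝ)) = 0; simp
  · show (∫ _ in y1..y2, scaledCoord x1 x2 x ^ 2 - 1 / 3)
        = (y2 - y1) * (scaledCoord x1 x2 x ^ 2 - 1 / 3)
    simp [smul_eq_mul]; ring

lemma hout1 (hxne : x1 ≠ x2) (l : Fin 9) :
    (∫ x in x1..x2, innerFst x1 x2 y1 y2 l x)
      = ![(x2 - x1) * (y2 - y1), 0, 0, 0, 0, 0, 0, 0, 0] l := by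
  fin_cases l
  · show (∫ _ in x1..x2, (y2 - y1)) = (x2 - x1) * (y2 - y1)
    simp [smul_eq_mul]; ring
  · show (∫ _ in x1..x2, (0 : ℝ)) = 0; simp
  · show (∫ x in x1..x2, (y2 - y1) * ((x2 - x1) * scaledCoord x1 x2 x)) = 0
    rw [intervalIntegral.integral_const_mul, intervalIntegral.integral_const_mul, int_sc x1 x2 hxne, mul_zero, mul_zero]
  · show (∫ _ in x1..x2, (0 : ℝ)) = 0; simp
  · show (∫ _ in x1..x2, (0 : ℝ)) = 0; simp
  · show (∫ x in x1..x2, (y2 - y1) * ((x2 - x1) * (scaledCoord x1 x2 x ^ 2 - 1 / 3))) = 0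
    rw [intervalIntegral.integral_const_mul, intervalIntegral.integral_const_mul, int_sc_sq x1 x2 hxne, mul_zero, mul_zero]
  · show (∫ _ in x1..x2, (0 : ℝ)) = 0; simp
  · show (∫ _ in x1..x2, (0 : ℝ)) = 0; simp
  · show (∫ _ in x1..x2, (0 : ℝ)) = 0; simp

lemma hout2 (hxne : x1 ≠ x2) (l : Fin 9) :
    (∫ x in x1..x2, innerSnd x1 x2 y1 y2 l x)
      = ![0, (x2 - x1) * (y2 - y1), 0, 0, 0, 0, 0, 0, 0] l := by
  fin_cases l
  · show (∫ _ in x1..x2, (0 : ℝ)) = 0; simp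
  · show (∫ _ in x1..x2, (y2 - y1)) = (x2 - x1) * (y2 - y1)
    simp [smul_eq_mul]; ring
  · show (∫ _ in x1..x2, (0 : ℝ)) = 0; simp
  · show (∫ _ in x1..x2, (0 : ℝ)) = 0; simp
  · show (∫ x in x1..x2, (y2 - y1) * scaledCoord x1 x2 x) = 0
    rw [intervalIntegral.integral_const_mul, int_sc x1 x2 hxne, mul_zero]
  · show (∫ _ in x1..x2, (0 : ℝ)) = 0; simp
  · show (∫ _ in x1..x2, (0 : ℝ)) = 0; simp
  · show (∫ _ in x1..x2, (0 : ℝ)) = 0; simp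
  · show (∫ x in x1..x2, (y2 - y1) * (scaledCoord x1 x2 x ^ 2 - 1 / 3)) = 0
    rw [intervalIntegral.integral_const_mul, int_sc_sq x1 x2 hxne, mul_zero]

end


/-- The locally divergence-free projection preserves cell averages of the
magnetic field: for every `B ∈ L²(K; ℝ²)`, `∫_K (PB)₁ = ∫_K B₁` and `∫_K (PB)₂ = ∫_K B₂`. -/
theorem ldfProj_preserves_cell_average
    (x1 x2 y1 y2 : ℝ) (hx : x1 < x2) (hy : y1 < y2)
    (B : ℝ → ℝ → ℝ × ℝ)
    (hB : MemLp (fun p : ℝ × ℝ => B p.1 p.2) 2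
      (volume.restrict (Set.Icc x1 x2 ×ˢ Set.Icc y1 y2))) :
    (∫ x in x1..x2, ∫ y in y1..y2, (ldfProj x1 x2 y1 y2 B x y).1)
      = (∫ x in x1..x2, ∫ y in y1..y2, (B x y).1)
    ∧ (∫ x in x1..x2, ∫ y in y1..y2, (ldfProj x1 x2 y1 y2 B x y).2)
      = (∫ x in x1..x2, ∫ y in y1..y2, (B x y).2) := by
  have hxne : x1 ≠ x2 := ne_of_lt hx
  have hyne : y1 ≠ y2 := ne_of_lt hy
  have harea : (x2 - x1) * (y2 - y1) ≠ 0 :=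
    mul_ne_zero (sub_ne_zero.mpr (Ne.symm hxne)) (sub_ne_zero.mpr (Ne.symm hyne))
  set c : Fin 9 → ℝ := fun l =>
    ipK x1 x2 y1 y2 B (ldfBasis x1 x2 y1 y2 l)
      / ipK x1 x2 y1 y2 (ldfBasis x1 x2 y1 y2 l) (ldfBasis x1 x2 y1 y2 l) with hc
  have hden : ipK x1 x2 y1 y2 (ldfBasis x1 x2 y1 y2 0) (ldfBasis x1 x2 y1 y2 0)
      = (x2 - x1) * (y2 - y1) := by
    simp [ipK, ldfBasis, smul_eq_mul]; ring
  have hden' : ipK x1 x2 y1 y2 (ldfBasis x1 x2 y1 y2 1) (ldfBasis x1 x2 y1 y2 1)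
      = (x2 - x1) * (y2 - y1) := by
    simp [ipK, ldfBasis, smul_eq_mul]; ring
  have hnum : ipK x1 x2 y1 y2 B (ldfBasis x1 x2 y1 y2 0)
      = ∫ x in x1..x2, ∫ y in y1..y2, (B x y).1 := by
    simp [ipK, ldfBasis]
  have hnum' : ipK x1 x2 y1 y2 B (ldfBasis x1 x2 y1 y2 1)
      = ∫ x in x1..x2, ∫ y in y1..y2, (B x y).2 := by
    simp [ipK, ldfBasis]
  constructor
  · have hstep : ∀ x : ℝ, (∫ y in y1..y2, (ldfProj x1 x2 y1 y2 B x y).1)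
        = ∑ l : Fin 9, c l * innerFst x1 x2 y1 y2 l x := by
      intro x
      have hpt : ∀ y, (ldfProj x1 x2 y1 y2 B x y).1
          = ∑ l : Fin 9, c l * (ldfBasis x1 x2 y1 y2 l x y).1 := by
        intro y; simp [ldfProj, hc, Prod.fst_sum]
      rw [intervalIntegral.integral_congr (fun y _ => hpt y),
        intervalIntegral.integral_finset_sum (f := fun l y => c l * (ldfBasis x1 x2 y1 y2 l x y).1) (fun l _ =>
          ((continuous_const.mul (hcy1 x1 x2 y1 y2 l x)).intervalIntegrable _ _))]
      exact Finset.sum_congr rfl fun l _ => by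
        rw [intervalIntegral.integral_const_mul, hin1 x1 x2 y1 y2 hyne l x]
    rw [intervalIntegral.integral_congr (fun x _ => hstep x),
      intervalIntegral.integral_finset_sum (f := fun l x => c l * innerFst x1 x2 y1 y2 l x) (fun l _ =>
        ((continuous_const.mul (hGcont1 x1 x2 y1 y2 l)).intervalIntegrable _ _))]
    have : ∀ l : Fin 9, (∫ x in x1..x2, c l * innerFst x1 x2 y1 y2 l x)
        = c l * ![(x2 - x1) * (y2 - y1), 0, 0, 0, 0, 0, 0, 0, 0] l := fun l => by
      rw [intervalIntegral.integral_const_mul, hout1 x1 x2 y1 y2 hxne l]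
    rw [Finset.sum_congr rfl fun l _ => this l]
    simp only [Fin.sum_univ_succ, Finset.univ_eq_empty, Finset.sum_empty,
      Matrix.cons_val_zero, Matrix.cons_val_succ, mul_zero, add_zero, Fin.isValue]
    rw [hc]
    simp only [hden, hnum]
    exact div_mul_cancel₀ _ harea
  · have hstep : ∀ x : ℝ, (∫ y in y1..y2, (ldfProj x1 x2 y1 y2 B x y).2)
        = ∑ l : Fin 9, c l * innerSnd x1 x2 y1 y2 l x := by
      intro x
      have hpt : ∀ y, (ldfProj x1 x2 y1 y2 B x y).2
          = ∑ l : Fin 9, c l * (ldfBasis x1 x2 y1 y2 l x y).2 := by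
        intro y; simp [ldfProj, hc, Prod.snd_sum]
      rw [intervalIntegral.integral_congr (fun y _ => hpt y),
        intervalIntegral.integral_finset_sum (f := fun l y => c l * (ldfBasis x1 x2 y1 y2 l x y).2) (fun l _ =>
          ((continuous_const.mul (hcy2 x1 x2 y1 y2 l x)).intervalIntegrable _ _))]
      exact Finset.sum_congr rfl fun l _ => by
        rw [intervalIntegral.integral_const_mul, hin2 x1 x2 y1 y2 hyne l x]
    rw [intervalIntegral.integral_congr (fun x _ => hstep x),
      intervalIntegral.integral_finset_sum (f := fun l x => c l * innerSnd x1 x2 y1 y2 l x) (fun l _ =>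
        ((continuous_const.mul (hGcont2 x1 x2 y1 y2 l)).intervalIntegrable _ _))]
    have : ∀ l : Fin 9, (∫ x in x1..x2, c l * innerSnd x1 x2 y1 y2 l x)
        = c l * ![0, (x2 - x1) * (y2 - y1), 0, 0, 0, 0, 0, 0, 0] l := fun l => by
      rw [intervalIntegral.integral_const_mul, hout2 x1 x2 y1 y2 hxne l]
    rw [Finset.sum_congr rfl fun l _ => this l]
    simp only [Fin.sum_univ_succ, Finset.univ_eq_empty, Finset.sum_empty,
      Matrix.cons_val_zero, Matrix.cons_val_succ, mul_zero, add_zero, zero_add, Fin.isValue, Fin.succ_zero_eq_one]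
    rw [hc]
    simp only [hden', hnum']
    exact div_mul_cancel₀ _ harea
end
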